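/- Let w be a nonnegative real random variable and let C > 0 and α ∈ (2,3) be such that lim_{x→∞} x^{α−1} P(w > x) = C. Then for every δ > 0 there is a unique σ(δ) > 0 with δ·E[w²/(1+σ(δ)w)] = 1, and lim_{δ→0⁺} σ(δ) / δ^{1/(3−α)} = (Cπ(α−1)/sin(πα))^{1/(3−α)}. -/

import Mathlib

open MeasureTheory Filter Real
open scoped Topology

open Set
set_option maxHeartbeats 1000000

noncomputable section CriticalAux

variable {Ω : Type*} [MeasurableSpace Ω] (μ : Measure Ω) [IsProbabilityMeasure μ]
  {w : Ω → ℝ} {C α : ℝ}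



lemma real_beta {u v : ℝ} (hu : 0 < u) (hv : 0 < v) :
    ∫ x in (0:ℝ)..1, x ^ (u-1) * (1-x) ^ (v-1) =
      Real.Gamma u * Real.Gamma v / Real.Gamma (u+v) := by
  have key := Complex.Gamma_mul_Gamma_eq_betaIntegral (s := (u:ℂ)) (t := (v:ℂ))
    (by simpa using hu) (by simpa using hv)
  have hbeta : Complex.betaIntegral (u:ℂ) (v:ℂ) =
      ((∫ x in (0:ℝ)..1, x ^ (u-1) * (1-x) ^ (v-1) : ℝ) : ℂ) := by
    rw [Complex.betaIntegral, ← intervalIntegral.integral_ofReal]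
    refine intervalIntegral.integral_congr fun x hx => ?_
    rw [uIcc_of_le (by norm_num : (0:ℝ) ≤ 1)] at hx
    obtain ⟨hx0, hx1⟩ := hx
    rw [show ((u:ℂ)-1) = ((u-1:ℝ):ℂ) by push_cast; ring,
      show ((v:ℂ)-1) = ((v-1:ℝ):ℂ) by push_cast; ring,
      show ((1:ℂ) - (x:ℂ)) = ((1-x:ℝ):ℂ) by push_cast; ring,
      ← Complex.ofReal_cpow hx0, ← Complex.ofReal_cpow (by linarith)]
    push_cast
    ring
  rw [hbeta] at key
  have hne : Real.Gamma (u+v) ≠ 0 := (Real.Gamma_pos_of_pos (by linarith)).ne'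
  have : ((Real.Gamma u * Real.Gamma v : ℝ) : ℂ) =
      ((Real.Gamma (u+v) * ∫ x in (0:ℝ)..1, x ^ (u-1) * (1-x) ^ (v-1) : ℝ) : ℂ) := by
    push_cast
    rw [← Complex.Gamma_ofReal, ← Complex.Gamma_ofReal]
    push_cast at key ⊢
    rw [key]
    rw [← Complex.Gamma_ofReal]
    push_cast
    ring
  have h2 := Complex.ofReal_inj.mp this
  field_simp
  linarith [h2]



lemma integrable_shape {p q : ℝ} (hp : -1 < p) (hq : p + q < -1) :
    IntegrableOn (fun u => u ^ p * (1+u) ^ q) (Ioi (0:ℝ)) := by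
  have hmeas : Measurable fun u : ℝ => u ^ p * (1+u) ^ q :=
    by fun_prop
  have h1 : IntegrableOn (fun u => u ^ p * (1+u) ^ q) (Ioc (0:ℝ) 1) := by
    have hbase : IntegrableOn (fun u : ℝ => (2:ℝ) ^ |q| * u ^ p) (Ioc (0:ℝ) 1) := by
      refine Integrable.const_mul ?_ _
      have := intervalIntegral.intervalIntegrable_rpow' (a := 0) (b := 1) hp
      rw [intervalIntegrable_iff_integrableOn_Ioc_of_le (by norm_num : (0:ℝ) ≤ 1)] at this
      exact this
    refine Integrable.mono hbase hmeas.aestronglyMeasurable ?_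
    filter_upwards [ae_restrict_mem measurableSet_Ioc] with u hu
    obtain ⟨hu0, hu1⟩ := hu
    have hup : (0:ℝ) < u ^ p := rpow_pos_of_pos hu0 p
    rw [Real.norm_eq_abs, Real.norm_eq_abs, abs_of_nonneg (by positivity),
      abs_of_nonneg (by positivity)]
    rw [mul_comm ((2:ℝ) ^ |q|) _]
    refine mul_le_mul_of_nonneg_left ?_ hup.le
    rcases le_or_gt 0 q with h | h
    · calc (1+u) ^ q ≤ (2:ℝ) ^ q := by
            exact rpow_le_rpow (by linarith) (by linarith) h
        _ ≤ (2:ℝ) ^ |q| := by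
            exact rpow_le_rpow_of_exponent_le (by norm_num) (le_abs_self q)
    · calc (1+u) ^ q ≤ (1:ℝ) ^ q := by
            exact rpow_le_rpow_of_nonpos (by norm_num) (by linarith) h.le
        _ = 1 := Real.one_rpow q
        _ ≤ (2:ℝ) ^ |q| := Real.one_le_rpow (by norm_num) (abs_nonneg q)
  have h2 : IntegrableOn (fun u => u ^ p * (1+u) ^ q) (Ioi (1:ℝ)) := by
    have hbase : IntegrableOn (fun u : ℝ => (2:ℝ) ^ |q| * u ^ (p+q)) (Ioi (1:ℝ)) :=
      Integrable.const_mul (integrableOn_Ioi_rpow_of_lt hq one_pos) _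
    refine Integrable.mono hbase hmeas.aestronglyMeasurable ?_
    filter_upwards [ae_restrict_mem measurableSet_Ioi] with u hu
    have hu1 : (1:ℝ) < u := hu
    have hu0 : (0:ℝ) < u := by linarith
    have hup : (0:ℝ) < u ^ p := rpow_pos_of_pos hu0 p
    rw [Real.norm_eq_abs, Real.norm_eq_abs, abs_of_nonneg (by positivity),
      abs_of_nonneg (by positivity), Real.rpow_add hu0, ← mul_assoc,
      mul_comm ((2:ℝ) ^ |q|) _, mul_assoc]
    refine mul_le_mul_of_nonneg_left ?_ hup.le
    rcases le_or_gt 0 q with h | h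
    · calc (1+u) ^ q ≤ (2*u) ^ q := by
            refine rpow_le_rpow (by linarith) (by linarith) h
        _ = (2:ℝ) ^ q * u ^ q := Real.mul_rpow (by norm_num) hu0.le
        _ ≤ (2:ℝ) ^ |q| * u ^ q := by
            refine mul_le_mul_of_nonneg_right
              (rpow_le_rpow_of_exponent_le (by norm_num) (le_abs_self q))
              (rpow_pos_of_pos hu0 q).le
    · calc (1+u) ^ q ≤ u ^ q := rpow_le_rpow_of_nonpos hu0 (by linarith) h.le
        _ ≤ (2:ℝ) ^ |q| * u ^ q := by
            nth_rewrite 1 [← one_mul (u ^ q)]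
            exact mul_le_mul_of_nonneg_right
              (Real.one_le_rpow (by norm_num) (abs_nonneg q)) (rpow_pos_of_pos hu0 q).le
  have : (Ioi (0:ℝ)) = Ioc (0:ℝ) 1 ∪ Ioi (1:ℝ) := by
    rw [Ioc_union_Ioi_eq_Ioi]; norm_num
  rw [this]
  exact h1.union h2



lemma beta_Ioi {s b : ℝ} (hs : 0 < s) (hsb : s < b) :
    ∫ u in Ioi (0:ℝ), u ^ (s-1) * (1+u) ^ (-b) =
      Real.Gamma s * Real.Gamma (b-s) / Real.Gamma b := by
  have himg : (fun x : ℝ => x / (1-x)) '' Ioo 0 1 = Ioi (0:ℝ) := by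
    ext y
    constructor
    · rintro ⟨x, ⟨hx0, hx1⟩, rfl⟩
      exact div_pos hx0 (by linarith)
    · intro hy
      have hy0 : (0:ℝ) < y := hy
      refine ⟨y / (1+y), ⟨div_pos hy0 (by linarith), by
        rw [div_lt_one (by linarith)]; linarith⟩, ?_⟩
      show y/(1+y) / (1 - y/(1+y)) = y
      have h1 : 1 - y/(1+y) = 1/(1+y) := by field_simp; ring
      rw [h1]
      field_simp
  have hderiv : ∀ x ∈ Ioo (0:ℝ) 1, HasDerivWithinAt (fun x : ℝ => x / (1-x))
      (((1-x)^2)⁻¹) (Ioo 0 1) x := by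
    intro x ⟨hx0, hx1⟩
    have h1x : (1:ℝ) - x ≠ 0 := by simp only [sub_ne_zero]; intro h; linarith
    have := (hasDerivAt_id x).div ((hasDerivAt_const x 1).sub (hasDerivAt_id x)) h1x
    have e : (((1:ℝ)-x)^2)⁻¹ = (1 * (1 - x) - x * (0 - 1)) / (1-x)^2 := by field_simp; ring
    rw [e]; exact this.hasDerivWithinAt
  have hinj : InjOn (fun x : ℝ => x / (1-x)) (Ioo 0 1) := by
    intro x ⟨hx0, hx1⟩ y ⟨hy0, hy1⟩ h
    simp only at h
    rw [div_eq_div_iff (by linarith) (by linarith)] at h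
    nlinarith
  have key := integral_image_eq_integral_abs_deriv_smul measurableSet_Ioo hderiv hinj
    (fun u => u ^ (s-1) * (1+u) ^ (-b))
  rw [himg] at key
  rw [key]
  have congr1 : ∫ x in Ioo (0:ℝ) 1, |((1-x)^2)⁻¹| • ((x/(1-x)) ^ (s-1) * (1+x/(1-x)) ^ (-b))
      = ∫ x in Ioo (0:ℝ) 1, x ^ (s-1) * (1-x) ^ (b-s-1) := by
    refine setIntegral_congr_fun measurableSet_Ioo fun x ⟨hx0, hx1⟩ => ?_
    have h1x : (0:ℝ) < 1 - x := by linarith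
    have e1 : 1 + x/(1-x) = (1-x)⁻¹ := by field_simp; ring
    have e2 : (((1-x):ℝ)^2)⁻¹ = (1-x) ^ (-2:ℝ) := by
      rw [← Real.rpow_natCast (1-x) 2, ← Real.rpow_neg h1x.le]; norm_num
    have e3 : (x/(1-x)) ^ (s-1) = x^(s-1) * ((1-x) ^ (s-1))⁻¹ := by
      rw [Real.div_rpow hx0.le h1x.le, div_eq_mul_inv]
    have e4 : (((1-x):ℝ)⁻¹) ^ (-b) = (1-x) ^ b := by
      rw [← Real.rpow_neg_one, ← Real.rpow_mul h1x.le]; norm_num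
    rw [smul_eq_mul, abs_of_pos (by positivity), e1, e2, e3, e4,
      ← Real.rpow_neg h1x.le,
      show b-s-1 = -2 + (-(s-1) + b) by ring, Real.rpow_add h1x, Real.rpow_add h1x]
    ring
  rw [congr1, ← integral_Ioc_eq_integral_Ioo,
    ← intervalIntegral.integral_of_le (by norm_num : (0:ℝ) ≤ 1)]
  have hrb := real_beta hs (by linarith : (0:ℝ) < b - s)
  rw [show s + (b - s) = b by ring, show (b-s) - 1 = b - s - 1 by ring] at hrb
  exact hrb



lemma ftc_deriv {σ : ℝ} (hσ : 0 < σ) {t : ℝ} (ht : 0 ≤ t) :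
    HasDerivAt (fun y : ℝ => y^2/(1+σ*y)) (t*(2+σ*t)/(1+σ*t)^2) t := by
  have hne : 1 + σ*t ≠ 0 := by nlinarith
  have h := (hasDerivAt_pow 2 t).div
    ((hasDerivAt_const t (1:ℝ)).add ((hasDerivAt_id t).const_mul σ)) hne
  have e : t*(2+σ*t)/(1+σ*t)^2 = ((2:ℕ) * t ^ (2 - 1) * (1 + σ * id t) - t ^ 2 * (0 + σ * 1)) / (1 + σ * id t) ^ 2 := by
    simp only [id]; field_simp; ring
  rw [e]; exact h

lemma ftc_cont {σ : ℝ} (hσ : 0 < σ) {x : ℝ} (hx : 0 ≤ x) :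
    IntervalIntegrable (fun t : ℝ => t*(2+σ*t)/(1+σ*t)^2) volume 0 x := by
  refine ContinuousOn.intervalIntegrable ?_
  have : ∀ y ∈ uIcc (0:ℝ) x, (1+σ*y)^2 ≠ 0 := by
    intro y hy
    rw [uIcc_of_le hx] at hy
    have := hy.1
    positivity
  exact ContinuousOn.div (by fun_prop) (by fun_prop) this

lemma ftc_aux {σ : ℝ} (hσ : 0 < σ) {x : ℝ} (hx : 0 ≤ x) :
    ∫ t in (0:ℝ)..x, t*(2+σ*t)/(1+σ*t)^2 = x^2/(1+σ*x) := by
  have := intervalIntegral.integral_eq_sub_of_hasDerivAt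
    (f := fun y : ℝ => y^2/(1+σ*y)) (f' := fun t : ℝ => t*(2+σ*t)/(1+σ*t)^2)
    (a := 0) (b := x) ?_ (ftc_cont hσ hx)
  · rw [this]; norm_num
  · intro t ht
    rw [uIcc_of_le hx] at ht
    exact ftc_deriv hσ ht.1




lemma Fbar_antitone : Antitone (fun t => (μ {ω | t < w ω}).toReal) := by
  intro t t' h
  refine ENNReal.toReal_mono (measure_ne_top μ _) (measure_mono ?_)
  intro ω hω
  exact lt_of_le_of_lt h hω

lemma Fbar_measurable : Measurable (fun t => (μ {ω | t < w ω}).toReal) :=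
  (Fbar_antitone μ (w := w)).measurable

lemma layercake_main (hw_meas : Measurable w) (hw_nonneg : ∀ ω, 0 ≤ w ω)
    {σ : ℝ} (hσ : 0 < σ) :
    ∫⁻ ω, ENNReal.ofReal ((w ω)^2/(1+σ*w ω)) ∂μ =
      ∫⁻ t in Ioi 0, μ {ω | t < w ω} * ENNReal.ofReal (t*(2+σ*t)/(1+σ*t)^2) := by
  have key := lintegral_comp_eq_lintegral_meas_lt_mul μ
    (f := w) (g := fun t => t*(2+σ*t)/(1+σ*t)^2)
    (Eventually.of_forall hw_nonneg) hw_meas.aemeasurable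
    (fun t ht => ftc_cont hσ ht.le)
    ?_
  · rw [← key]
    refine lintegral_congr fun ω => ?_
    rw [ftc_aux hσ (hw_nonneg ω)]
  · filter_upwards [ae_restrict_mem measurableSet_Ioi] with t ht
    have ht' : (0:ℝ) < t := ht
    have : (0:ℝ) < 1 + σ*t := by nlinarith
    positivity







lemma tail_bound (hC : 0 < C) (hα : α ∈ Set.Ioo (2:ℝ) 3)
    (htail : Tendsto (fun x : ℝ => x ^ (α - 1) * (μ {ω | x < w ω}).toReal) atTop (𝓝 C)) :
    ∃ x₀ : ℝ, 1 ≤ x₀ ∧ ∀ x, x₀ ≤ x → (μ {ω | x < w ω}).toReal ≤ (C+1) * x ^ (1-α) := by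
  have hev : ∀ᶠ x in atTop, x ^ (α - 1) * (μ {ω | x < w ω}).toReal ≤ C + 1 := by
    filter_upwards [htail.eventually_le_const (by linarith : C < C+1)] with x hx using hx
  obtain ⟨x₁, hx₁⟩ := hev.exists_forall_of_atTop
  refine ⟨max x₁ 1, le_max_right _ _, fun x hx => ?_⟩
  have hx1 : (1:ℝ) ≤ x := le_trans (le_max_right _ _) hx
  have hx0 : (0:ℝ) < x := by linarith
  have h := hx₁ x (le_trans (le_max_left _ _) hx)
  have hxpow : (0:ℝ) < x ^ (1-α) := rpow_pos_of_pos hx0 _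
  have hinv : x ^ (1-α) * x ^ (α-1) = 1 := by
    rw [← Real.rpow_add hx0]; norm_num
  calc (μ {ω | x < w ω}).toReal = x ^ (1-α) * (x ^ (α-1) * (μ {ω | x < w ω}).toReal) := by
        rw [← mul_assoc, hinv, one_mul]
    _ ≤ x ^ (1-α) * (C+1) := by
        exact mul_le_mul_of_nonneg_left h hxpow.le
    _ = (C+1) * x ^ (1-α) := mul_comm _ _

lemma w_int (hw_meas : Measurable w) (hw_nonneg : ∀ ω, 0 ≤ w ω)
    (hC : 0 < C) (hα : α ∈ Set.Ioo (2:ℝ) 3)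
    (htail : Tendsto (fun x : ℝ => x ^ (α - 1) * (μ {ω | x < w ω}).toReal) atTop (𝓝 C)) :
    Integrable w μ := by
  obtain ⟨x₀, hx₀1, hx₀⟩ := tail_bound μ hC hα htail
  rw [← memLp_one_iff_integrable]
  constructor
  · exact hw_meas.aestronglyMeasurable
  · rw [eLpNorm_one_eq_lintegral_enorm]; simp only [enorm_eq_nnnorm]
    have heq : ∫⁻ ω, ‖w ω‖₊ ∂μ = ∫⁻ t in Ioi 0, μ {ω | t < w ω} := by
      rw [← lintegral_eq_lintegral_meas_lt μ (Eventually.of_forall hw_nonneg)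
        hw_meas.aemeasurable]
      refine lintegral_congr fun ω => ?_
      rw [← enorm_eq_nnnorm, ← ofReal_norm, Real.norm_eq_abs, abs_of_nonneg (hw_nonneg ω)]
    rw [heq]
    have hsplit : (Ioi (0:ℝ)) = Ioc (0:ℝ) x₀ ∪ Ioi x₀ := by
      rw [Ioc_union_Ioi_eq_Ioi]; linarith
    rw [hsplit, lintegral_union measurableSet_Ioi Ioc_disjoint_Ioi_same]
    have h1 : ∫⁻ t in Ioc (0:ℝ) x₀, μ {ω | t < w ω} < ⊤ := by
      calc ∫⁻ t in Ioc (0:ℝ) x₀, μ {ω | t < w ω} ≤ ∫⁻ _ in Ioc (0:ℝ) x₀, 1 := by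
            exact setLIntegral_mono' measurableSet_Ioc fun t _ => prob_le_one
        _ = ENNReal.ofReal x₀ := by
            rw [setLIntegral_one, Real.volume_Ioc]; simp
        _ < ⊤ := ENNReal.ofReal_lt_top
    have h2 : ∫⁻ t in Ioi x₀, μ {ω | t < w ω} < ⊤ := by
      have hx₀0 : (0:ℝ) < x₀ := by linarith
      have hint : IntegrableOn (fun t : ℝ => (C+1) * t ^ (1-α)) (Ioi x₀) :=
        (integrableOn_Ioi_rpow_of_lt (by linarith [hα.1] : 1-α < -1) hx₀0).const_mul _
      calc ∫⁻ t in Ioi x₀, μ {ω | t < w ω}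
          ≤ ∫⁻ t in Ioi x₀, ENNReal.ofReal ((C+1) * t ^ (1-α)) := by
            refine setLIntegral_mono' measurableSet_Ioi fun t ht => ?_
            rw [← ENNReal.ofReal_toReal (measure_ne_top μ _)]
            exact ENNReal.ofReal_le_ofReal (hx₀ t (le_of_lt ht))
        _ < ⊤ := by
            rw [← ofReal_integral_eq_lintegral_ofReal hint ?_]
            · exact ENNReal.ofReal_lt_top
            · filter_upwards [ae_restrict_mem measurableSet_Ioi] with t ht
              have : (0:ℝ) < t := by have : x₀ < t := ht; linarith
              positivity
    exact ENNReal.add_lt_top.mpr ⟨h1, h2⟩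









lemma integrand_int (hw_meas : Measurable w) (hw_nonneg : ∀ ω, 0 ≤ w ω)
    (hw_int : Integrable w μ) {σ : ℝ} (hσ : 0 < σ) :
    Integrable (fun ω => (w ω)^2/(1+σ*w ω)) μ := by
  have hm : Measurable fun ω => (w ω)^2 / (1+σ*w ω) :=
    (hw_meas.pow_const 2).div (measurable_const.add (hw_meas.const_mul σ))
  refine (hw_int.const_mul σ⁻¹).mono hm.aestronglyMeasurable ?_
  · refine Eventually.of_forall fun ω => ?_
    have h0 := hw_nonneg ω
    have hd : (0:ℝ) < 1 + σ * w ω := by nlinarith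
    rw [Real.norm_eq_abs, Real.norm_eq_abs, abs_of_nonneg (by positivity),
      abs_of_nonneg (by positivity)]
    rw [div_le_iff₀ hd]
    rw [inv_mul_eq_div, div_mul_eq_mul_div, le_div_iff₀ hσ]
    nlinarith

lemma nonneg_integrand (hw_nonneg : ∀ ω, 0 ≤ w ω) {σ : ℝ} (hσ : 0 < σ) (ω : Ω) :
    0 ≤ (w ω)^2/(1+σ*w ω) := by
  have h0 := hw_nonneg ω
  have hd : (0:ℝ) < 1 + σ * w ω := by nlinarith
  positivity

lemma G_eq_H (hw_meas : Measurable w) (hw_nonneg : ∀ ω, 0 ≤ w ω)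
    {σ : ℝ} (hσ : 0 < σ)
    (layercake_main : ∫⁻ ω, ENNReal.ofReal ((w ω)^2/(1+σ*w ω)) ∂μ =
      ∫⁻ t in Ioi 0, μ {ω | t < w ω} * ENNReal.ofReal (t*(2+σ*t)/(1+σ*t)^2)) :
    ∫ ω, (w ω)^2/(1+σ*w ω) ∂μ =
      ∫ t in Ioi 0, (μ {ω | t < w ω}).toReal * (t*(2+σ*t)/(1+σ*t)^2) := by
  have hmeasF : Measurable (fun t => (μ {ω | t < w ω}).toReal) := by
    refine Antitone.measurable fun t t' h => ?_
    refine ENNReal.toReal_mono (measure_ne_top μ _) (measure_mono ?_)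
    exact fun ω hω => lt_of_le_of_lt h hω
  have hL : ∫ ω, (w ω)^2/(1+σ*w ω) ∂μ =
      (∫⁻ ω, ENNReal.ofReal ((w ω)^2/(1+σ*w ω)) ∂μ).toReal := by
    rw [integral_eq_lintegral_of_nonneg_ae
      (Eventually.of_forall (nonneg_integrand hw_nonneg hσ))
      ((hw_meas.pow_const 2).div
        (measurable_const.add (hw_meas.const_mul σ))).aestronglyMeasurable]
  have hR : ∫ t in Ioi 0, (μ {ω | t < w ω}).toReal * (t*(2+σ*t)/(1+σ*t)^2) =
      (∫⁻ t in Ioi 0, ENNReal.ofReal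
        ((μ {ω | t < w ω}).toReal * (t*(2+σ*t)/(1+σ*t)^2))).toReal := by
    rw [integral_eq_lintegral_of_nonneg_ae ?_ ?_]
    · filter_upwards [ae_restrict_mem measurableSet_Ioi] with t ht
      have ht' : (0:ℝ) < t := ht
      have : (0:ℝ) < 1 + σ*t := by nlinarith
      positivity
    · exact (hmeasF.mul (by fun_prop)).aestronglyMeasurable
  rw [hL, hR, layercake_main]
  congr 1
  refine setLIntegral_congr_fun measurableSet_Ioi (fun t ht => ?_)
  have ht' : (0:ℝ) < t := ht
  have hd : (0:ℝ) < 1 + σ*t := by nlinarith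
  rw [ENNReal.ofReal_mul ENNReal.toReal_nonneg, ENNReal.ofReal_toReal (measure_ne_top μ _)]







lemma const_value {α : ℝ} (hα : α ∈ Set.Ioo (2:ℝ) 3) :
    ∫ u in Ioi (0:ℝ), u ^ (2-α) * (2+u) / (1+u)^2 =
      (α-1) * π / Real.sin (π*α) := by
  obtain ⟨hα2, hα3⟩ := hα
  have hcongr : ∫ u in Ioi (0:ℝ), u ^ (2-α) * (2+u) / (1+u)^2 =
      ∫ u in Ioi (0:ℝ), (u ^ ((3-α)-1) * (1+u) ^ (-(1:ℝ)) +
        u ^ ((3-α)-1) * (1+u) ^ (-(2:ℝ))) := by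
    refine setIntegral_congr_fun measurableSet_Ioi fun u hu => ?_
    have hu' : (0:ℝ) < u := hu
    have h1u : (0:ℝ) < 1+u := by linarith
    rw [show (3-α)-1 = 2-α by ring, Real.rpow_neg h1u.le, Real.rpow_neg h1u.le,
      Real.rpow_one, show ((1:ℝ)+u) ^ (2:ℝ) = (1+u)^2 by
        rw [← Real.rpow_natCast (1+u) 2]; norm_num]
    field_simp
    ring
  rw [hcongr, integral_add
    (integrable_shape (by linarith) (by norm_num; linarith))
    (integrable_shape (by linarith) (by norm_num; linarith)),
    beta_Ioi (by linarith : (0:ℝ) < 3-α) (by linarith : (3:ℝ)-α < 1),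
    beta_Ioi (by linarith : (0:ℝ) < 3-α) (by linarith : (3:ℝ)-α < 2)]
  have hg1 : Real.Gamma 1 = 1 := Real.Gamma_one
  have hg2 : Real.Gamma 2 = 1 := Real.Gamma_two
  have he1 : (1:ℝ) - (3-α) = α-2 := by ring
  have he2 : (2:ℝ) - (3-α) = α-1 := by ring
  rw [he1, he2, hg1, hg2]
  have hrec : Real.Gamma (α-1) = (α-2) * Real.Gamma (α-2) := by
    rw [show α-1 = (α-2)+1 by ring, Real.Gamma_add_one (by intro h; apply (by linarith : α ≠ 2); linarith)]
  have hrefl : Real.Gamma (3-α) * Real.Gamma (α-2) = π / Real.sin (π*α) := by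
    have := Real.Gamma_mul_Gamma_one_sub (3-α)
    rw [he1] at this
    rw [this]
    congr 1
    rw [show π*(3-α) = (π - π*α) + 2*π by ring, Real.sin_add_two_pi, Real.sin_pi_sub]
  rw [hrec]
  rw [div_one, div_one, show Real.Gamma (3-α) * ((α-2) * Real.Gamma (α-2)) =
    (α-2) * (Real.Gamma (3-α) * Real.Gamma (α-2)) by ring, hrefl]
  field_simp
  ring






lemma H_scaled (hα : α ∈ Set.Ioo (2:ℝ) 3) {σ : ℝ} (hσ : 0 < σ) :
    σ ^ (3-α) * ∫ t in Ioi (0:ℝ), (μ {ω | t < w ω}).toReal * (t*(2+σ*t)/(1+σ*t)^2) =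
      ∫ u in Ioi (0:ℝ), σ ^ (1-α) * (μ {ω | u/σ < w ω}).toReal * (u*(2+u)/(1+u)^2) := by
  have key := integral_comp_mul_left_Ioi
    (g := fun t => (μ {ω | t < w ω}).toReal * (t*(2+σ*t)/(1+σ*t)^2)) (a := 0)
    (b := σ⁻¹) (inv_pos.mpr hσ)
  rw [mul_zero, inv_inv, smul_eq_mul] at key
  have hH : ∫ t in Ioi (0:ℝ), (μ {ω | t < w ω}).toReal * (t*(2+σ*t)/(1+σ*t)^2) =
      σ⁻¹ * ∫ x in Ioi (0:ℝ),
        (μ {ω | σ⁻¹*x < w ω}).toReal * ((σ⁻¹*x)*(2+σ*(σ⁻¹*x))/(1+σ*(σ⁻¹*x))^2) := by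
    rw [key]
    field_simp
    congr 1; funext t; ring
  rw [hH, ← mul_assoc, ← MeasureTheory.integral_const_mul]
  refine setIntegral_congr_fun measurableSet_Ioi fun u hu => ?_
  have hu' : (0:ℝ) < u := hu
  have hinv : σ⁻¹ * u = u / σ := by field_simp
  have hcanc : σ * (σ⁻¹ * u) = u := by field_simp
  rw [hcanc, hinv]
  have hpow : σ ^ (3-α) * σ⁻¹ * σ⁻¹ = σ ^ (1-α) := by
    rw [← Real.rpow_neg_one σ, ← Real.rpow_add hσ, ← Real.rpow_add hσ]
    congr 1
    ring
  have : (u/σ) * (2+u) / (1+u)^2 = σ⁻¹ * (u*(2+u)/(1+u)^2) := by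
    field_simp
  rw [this]
  calc σ ^ (3-α) * σ⁻¹ *
        ((μ {ω | u/σ < w ω}).toReal * (σ⁻¹ * (u*(2+u)/(1+u)^2)))
      = (σ ^ (3-α) * σ⁻¹ * σ⁻¹) * (μ {ω | u/σ < w ω}).toReal * (u*(2+u)/(1+u)^2) := by
        ring
    _ = σ ^ (1-α) * (μ {ω | u/σ < w ω}).toReal * (u*(2+u)/(1+u)^2) := by rw [hpow]










lemma abelian (hC : 0 < C) (hα : α ∈ Set.Ioo (2:ℝ) 3)
    (htail : Tendsto (fun x : ℝ => x ^ (α - 1) * (μ {ω | x < w ω}).toReal) atTop (𝓝 C))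
    {x₀ : ℝ} (hx₀1 : 1 ≤ x₀)
    (hx₀ : ∀ x, x₀ ≤ x → (μ {ω | x < w ω}).toReal ≤ (C+1) * x ^ (1-α)) :
    Tendsto (fun σ : ℝ => ∫ u in Ioi (0:ℝ),
        σ ^ (1-α) * (μ {ω | u/σ < w ω}).toReal * (u*(2+u)/(1+u)^2))
      (𝓝[>] 0) (𝓝 (C * ((α-1) * π / Real.sin (π*α)))) := by
  obtain ⟨hα2, hα3⟩ := hα
  have hx₀0 : (0:ℝ) < x₀ := by linarith
  set K := 2*((C+1) + x₀ ^ (α-1)) with hK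
  have hmF : Measurable (fun t => (μ {ω | t < w ω}).toReal) := by
    refine Antitone.measurable fun t t' h => ?_
    exact ENNReal.toReal_mono (measure_ne_top μ _)
      (measure_mono fun ω hω => lt_of_le_of_lt h hω)
  have hFle1 : ∀ t : ℝ, (μ {ω | t < w ω}).toReal ≤ 1 := fun t => by
    simpa using ENNReal.toReal_mono (show (1:ENNReal) ≠ ⊤ by simp) prob_le_one
  have hFnn : ∀ t : ℝ, 0 ≤ (μ {ω | t < w ω}).toReal := fun t => ENNReal.toReal_nonneg
  have hshape : ∀ u : ℝ, 0 < u → u*(2+u)/(1+u)^2 ≤ 2 * (u * (1+u) ^ (-(1:ℝ))) := by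
    intro u hu
    have h1u : (0:ℝ) < 1+u := by linarith
    rw [Real.rpow_neg h1u.le, Real.rpow_one, div_le_iff₀ (by positivity : (0:ℝ) < (1+u)^2)]
    have : 2 * (u * (1+u)⁻¹) * (1+u)^2 = 2*u*(1+u) := by field_simp
    rw [this]
    nlinarith
  have hshape_nn : ∀ u : ℝ, 0 < u → 0 ≤ u*(2+u)/(1+u)^2 := fun u hu => by
    have : (0:ℝ) < 1+u := by linarith
    positivity
  have hrw21 : ∀ u : ℝ, 0 < u → u ^ (1-α) * u = u ^ (2-α) := fun u hu => by
    nth_rewrite 2 [← Real.rpow_one u]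
    rw [← Real.rpow_add hu]
    congr 1; ring
  have hval : ∫ u in Ioi (0:ℝ), C * (u ^ (2-α) * (2+u) / (1+u)^2) =
      C * ((α-1) * π / Real.sin (π*α)) := by
    rw [MeasureTheory.integral_const_mul, const_value ⟨hα2, hα3⟩]
  rw [← hval]
  refine tendsto_integral_filter_of_dominated_convergence
    (bound := fun u => K * (u ^ (2-α) * (1+u) ^ (-(1:ℝ)))) ?_ ?_ ?_ ?_
  · -- measurability
    filter_upwards [self_mem_nhdsWithin] with σ hσ
    refine Measurable.aestronglyMeasurable ?_
    exact ((hmF.comp (measurable_id.div_const σ)).const_mul _).mul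
      ((measurable_id.mul (measurable_const.add measurable_id)).div
        ((measurable_const.add measurable_id).pow_const 2))
  · -- bound
    filter_upwards [self_mem_nhdsWithin] with σ hσ
    have hσ' : (0:ℝ) < σ := hσ
    filter_upwards [ae_restrict_mem measurableSet_Ioi] with u hu
    have hu' : (0:ℝ) < u := hu
    have h1u : (0:ℝ) < 1+u := by linarith
    have hσp : (0:ℝ) < σ ^ (1-α) := rpow_pos_of_pos hσ' _
    rw [Real.norm_eq_abs, abs_of_nonneg
      (mul_nonneg (mul_nonneg hσp.le (hFnn _)) (hshape_nn u hu'))]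
    have hcore : ∀ A : ℝ, 0 ≤ A →
        σ ^ (1-α) * (μ {ω | u/σ < w ω}).toReal ≤ A * u ^ (1-α) →
        σ ^ (1-α) * (μ {ω | u/σ < w ω}).toReal * (u*(2+u)/(1+u)^2) ≤
          2*A * (u ^ (2-α) * (1+u) ^ (-(1:ℝ))) := by
      intro A hA h
      calc σ ^ (1-α) * (μ {ω | u/σ < w ω}).toReal * (u*(2+u)/(1+u)^2)
          ≤ (A * u ^ (1-α)) * (2 * (u * (1+u) ^ (-(1:ℝ)))) := by
            refine mul_le_mul h (hshape u hu') (hshape_nn u hu') ?_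
            positivity
        _ = 2*A * ((u ^ (1-α) * u) * (1+u) ^ (-(1:ℝ))) := by ring
        _ = 2*A * (u ^ (2-α) * (1+u) ^ (-(1:ℝ))) := by rw [hrw21 u hu']
    have hbnn : (0:ℝ) ≤ u ^ (2-α) * (1+u) ^ (-(1:ℝ)) := by positivity
    rcases lt_or_ge u (σ*x₀) with hcase | hcase
    · -- small u
      have hA : σ ^ (1-α) * (μ {ω | u/σ < w ω}).toReal ≤ x₀ ^ (α-1) * u ^ (1-α) := by
        have hus : u/x₀ ≤ σ := by
          rw [div_le_iff₀ hx₀0]; nlinarith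
        have h1 : σ ^ (1-α) ≤ (u/x₀) ^ (1-α) :=
          Real.rpow_le_rpow_of_nonpos (by positivity) hus (by linarith)
        have h2 : (u/x₀) ^ (1-α) = u ^ (1-α) * x₀ ^ (α-1) := by
          rw [Real.div_rpow hu'.le hx₀0.le, div_eq_mul_inv, ← Real.rpow_neg hx₀0.le]
          congr 1; ring
        calc σ ^ (1-α) * (μ {ω | u/σ < w ω}).toReal ≤ σ ^ (1-α) * 1 :=
              mul_le_mul_of_nonneg_left (hFle1 _) (rpow_pos_of_pos hσ' _).le
          _ = σ ^ (1-α) := mul_one _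
          _ ≤ u ^ (1-α) * x₀ ^ (α-1) := h2 ▸ h1
          _ = x₀ ^ (α-1) * u ^ (1-α) := mul_comm _ _
      calc σ ^ (1-α) * (μ {ω | u/σ < w ω}).toReal * (u*(2+u)/(1+u)^2)
          ≤ 2*(x₀ ^ (α-1)) * (u ^ (2-α) * (1+u) ^ (-(1:ℝ))) :=
            hcore _ (rpow_pos_of_pos hx₀0 _).le hA
        _ ≤ K * (u ^ (2-α) * (1+u) ^ (-(1:ℝ))) := by
            refine mul_le_mul_of_nonneg_right ?_ hbnn
            rw [hK]; nlinarith [rpow_pos_of_pos hx₀0 (α-1)]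
    · -- large u
      have hxu : x₀ ≤ u/σ := by
        rw [le_div_iff₀ hσ']; linarith
      have hA : σ ^ (1-α) * (μ {ω | u/σ < w ω}).toReal ≤ (C+1) * u ^ (1-α) := by
        have h1 := hx₀ (u/σ) hxu
        have h2 : (u/σ) ^ (1-α) = u ^ (1-α) * σ ^ (α-1) := by
          rw [Real.div_rpow hu'.le hσ'.le, div_eq_mul_inv, ← Real.rpow_neg hσ'.le]
          congr 1; ring
        have h3 : σ ^ (1-α) * σ ^ (α-1) = 1 := by
          rw [← Real.rpow_add hσ']; norm_num
        calc σ ^ (1-α) * (μ {ω | u/σ < w ω}).toReal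
            ≤ σ ^ (1-α) * ((C+1) * (u/σ) ^ (1-α)) :=
              mul_le_mul_of_nonneg_left h1 (rpow_pos_of_pos hσ' _).le
          _ = (C+1) * u ^ (1-α) * (σ ^ (1-α) * σ ^ (α-1)) := by rw [h2]; ring
          _ = (C+1) * u ^ (1-α) := by rw [h3, mul_one]
      calc σ ^ (1-α) * (μ {ω | u/σ < w ω}).toReal * (u*(2+u)/(1+u)^2)
          ≤ 2*(C+1) * (u ^ (2-α) * (1+u) ^ (-(1:ℝ))) := hcore _ (by linarith) hA
        _ ≤ K * (u ^ (2-α) * (1+u) ^ (-(1:ℝ))) := by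
            refine mul_le_mul_of_nonneg_right ?_ hbnn
            rw [hK]; nlinarith [rpow_pos_of_pos hx₀0 (α-1)]
  · -- bound integrable
    exact (integrable_shape (by linarith) (by norm_num; linarith)).const_mul K
  · -- pointwise limit
    filter_upwards [ae_restrict_mem measurableSet_Ioi] with u hu
    have hu' : (0:ℝ) < u := hu
    have hdiv : Tendsto (fun σ : ℝ => u/σ) (𝓝[>] 0) atTop := by
      simp_rw [div_eq_mul_inv]
      exact Tendsto.const_mul_atTop hu' tendsto_inv_nhdsGT_zero
    have h1 : Tendsto (fun σ : ℝ => (u/σ) ^ (α-1) * (μ {ω | u/σ < w ω}).toReal)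
        (𝓝[>] 0) (𝓝 C) := htail.comp hdiv
    have h2 : Tendsto (fun σ : ℝ =>
        u ^ (1-α) * ((u/σ) ^ (α-1) * (μ {ω | u/σ < w ω}).toReal) * (u*(2+u)/(1+u)^2))
        (𝓝[>] 0) (𝓝 (u ^ (1-α) * C * (u*(2+u)/(1+u)^2))) :=
      (tendsto_const_nhds.mul h1).mul tendsto_const_nhds
    have heqpt : u ^ (1-α) * C * (u*(2+u)/(1+u)^2) = C * (u ^ (2-α) * (2+u) / (1+u)^2) := by
      rw [show u ^ (1-α) * C * (u*(2+u)/(1+u)^2) =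
        C * ((u ^ (1-α) * u) * (2+u) / (1+u)^2) by ring, hrw21 u hu']
    rw [heqpt] at h2
    refine h2.congr' ?_
    filter_upwards [self_mem_nhdsWithin] with σ hσ
    have hσ' : (0:ℝ) < σ := hσ
    have h3 : (u/σ) ^ (α-1) = u ^ (α-1) * σ ^ (1-α) := by
      rw [Real.div_rpow hu'.le hσ'.le, div_eq_mul_inv, ← Real.rpow_neg hσ'.le]
      congr 1; ring
    have h4 : u ^ (1-α) * u ^ (α-1) = 1 := by
      rw [← Real.rpow_add hu']; norm_num
    rw [h3, show u ^ (1-α) * (u ^ (α-1) * σ ^ (1-α) * (μ {ω | u/σ < w ω}).toReal) *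
        (u*(2+u)/(1+u)^2) = (u ^ (1-α) * u ^ (α-1)) * (σ ^ (1-α) *
        (μ {ω | u/σ < w ω}).toReal * (u*(2+u)/(1+u)^2)) by ring, h4, one_mul]








lemma pointwise_le (hw_nonneg : ∀ ω, 0 ≤ w ω) {σ : ℝ} (hσ : 0 < σ) (ω : Ω) :
    (w ω)^2/(1+σ*w ω) ≤ σ⁻¹ * w ω := by
  have h0 := hw_nonneg ω
  have hd : (0:ℝ) < 1 + σ * w ω := by nlinarith
  rw [div_le_iff₀ hd, inv_mul_eq_div, div_mul_eq_mul_div, le_div_iff₀ hσ]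
  nlinarith

lemma G_anti (hw_meas : Measurable w) (hw_nonneg : ∀ ω, 0 ≤ w ω)
    (hw_int : Integrable w μ) {σ τ : ℝ} (hσ : 0 < σ) (hστ : σ ≤ τ) :
    ∫ ω, (w ω)^2/(1+τ*w ω) ∂μ ≤ ∫ ω, (w ω)^2/(1+σ*w ω) ∂μ := by
  refine integral_mono (integrand_int μ hw_meas hw_nonneg hw_int (lt_of_lt_of_le hσ hστ))
    (integrand_int μ hw_meas hw_nonneg hw_int hσ) fun ω => ?_
  have h0 := hw_nonneg ω
  have hd : (0:ℝ) < 1 + σ * w ω := by nlinarith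
  gcongr

lemma G_cont (hw_meas : Measurable w) (hw_nonneg : ∀ ω, 0 ≤ w ω)
    (hw_int : Integrable w μ) {σ₀ : ℝ} (hσ₀ : 0 < σ₀) :
    ContinuousAt (fun σ => ∫ ω, (w ω)^2/(1+σ*w ω) ∂μ) σ₀ := by
  refine tendsto_integral_filter_of_dominated_convergence
    (bound := fun ω => (w ω)^2/(1+(σ₀/2)*w ω)) ?_ ?_ ?_ ?_
  · refine Eventually.of_forall fun σ => Measurable.aestronglyMeasurable ?_
    exact (hw_meas.pow_const 2).div (measurable_const.add (hw_meas.const_mul σ))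
  · filter_upwards [eventually_gt_nhds (by linarith : σ₀/2 < σ₀)] with σ hσ
    refine Eventually.of_forall fun ω => ?_
    have h0 := hw_nonneg ω
    have hd2 : (0:ℝ) < 1 + σ₀/2 * w ω := by nlinarith
    have hdd : (0:ℝ) < 1 + σ * w ω := by nlinarith
    rw [Real.norm_eq_abs, abs_of_nonneg (div_nonneg (sq_nonneg _) hdd.le)]
    gcongr
  · exact integrand_int μ hw_meas hw_nonneg hw_int (by linarith)
  · refine Eventually.of_forall fun ω => ?_
    have h0 := hw_nonneg ω
    have hd : (0:ℝ) < 1 + σ₀ * w ω := by nlinarith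
    exact (continuousAt_const.div
      ((continuous_const.add (continuous_id.mul continuous_const)).continuousAt) hd.ne')

lemma G_upper (hw_meas : Measurable w) (hw_nonneg : ∀ ω, 0 ≤ w ω)
    (hw_int : Integrable w μ) {σ : ℝ} (hσ : 0 < σ) :
    ∫ ω, (w ω)^2/(1+σ*w ω) ∂μ ≤ σ⁻¹ * ∫ ω, w ω ∂μ := by
  rw [← integral_const_mul]
  exact integral_mono (integrand_int μ hw_meas hw_nonneg hw_int hσ)
    (hw_int.const_mul _) (pointwise_le hw_nonneg hσ)

lemma mu_pos (hC : 0 < C)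
    (htail : Tendsto (fun x : ℝ => x ^ (α - 1) * (μ {ω | x < w ω}).toReal) atTop (𝓝 C)) :
    0 < μ {ω | 0 < w ω} := by
  have hev : ∀ᶠ x in atTop, C/2 < x ^ (α - 1) * (μ {ω | x < w ω}).toReal :=
    htail.eventually (eventually_gt_nhds (half_lt_self hC))
  obtain ⟨x, hx, hx1⟩ := (hev.and (eventually_ge_atTop (1:ℝ))).exists
  have hFpos : 0 < (μ {ω | x < w ω}).toReal := by
    by_contra h
    push_neg at h
    have : (μ {ω | x < w ω}).toReal = 0 := le_antisymm h ENNReal.toReal_nonneg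
    rw [this, mul_zero] at hx
    linarith
  have hμx : 0 < μ {ω | x < w ω} := by
    rcases ENNReal.toReal_pos_iff.mp hFpos with ⟨h1, _⟩
    exact h1
  refine lt_of_lt_of_le hμx (measure_mono fun ω hω => ?_)
  have : x < w ω := hω
  show 0 < w ω
  linarith

lemma G_strict (hw_meas : Measurable w) (hw_nonneg : ∀ ω, 0 ≤ w ω)
    (hw_int : Integrable w μ) (hpos : 0 < μ {ω | 0 < w ω})
    {σ τ : ℝ} (hσ : 0 < σ) (hστ : σ < τ) :
    ∫ ω, (w ω)^2/(1+τ*w ω) ∂μ < ∫ ω, (w ω)^2/(1+σ*w ω) ∂μ := by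
  have hτ : 0 < τ := lt_trans hσ hστ
  have hint_σ := integrand_int μ hw_meas hw_nonneg hw_int hσ
  have hint_τ := integrand_int μ hw_meas hw_nonneg hw_int hτ
  have hnn : 0 ≤ fun ω => (w ω)^2/(1+σ*w ω) - (w ω)^2/(1+τ*w ω) := by
    intro ω
    have h0 := hw_nonneg ω
    have hd : (0:ℝ) < 1 + σ * w ω := by nlinarith
    simp only [Pi.zero_apply, sub_nonneg]
    gcongr
  have hkey : 0 < ∫ ω, ((w ω)^2/(1+σ*w ω) - (w ω)^2/(1+τ*w ω)) ∂μ := by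
    rw [integral_pos_iff_support_of_nonneg hnn (hint_σ.sub hint_τ)]
    refine lt_of_lt_of_le hpos (measure_mono ?_)
    intro ω hω
    have h0 : 0 < w ω := hω
    have hdσ : (0:ℝ) < 1 + σ * w ω := by nlinarith
    have hdτ : (0:ℝ) < 1 + τ * w ω := by nlinarith
    have : (w ω)^2/(1+τ*w ω) < (w ω)^2/(1+σ*w ω) := by
      refine div_lt_div_of_pos_left (by positivity) hdσ ?_
      nlinarith
    simp only [Function.mem_support]
    intro hcontra
    rw [sub_eq_zero] at hcontra
    linarith [this, hcontra.ge]
  rw [integral_sub hint_σ hint_τ] at hkey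
  linarith




end CriticalAux

/-- Let `w ≥ 0` with tail `P(w > x) ~ C x^{-(α-1)}`, `C > 0`,
`α ∈ (2,3)`. Then for every `δ > 0` there is a unique `σ(δ) > 0` with
`δ·E[w²/(1+σ(δ)w)] = 1`, and
`σ(δ)/δ^{1/(3−α)} → (Cπ(α−1)/sin(πα))^{1/(3−α)}` as `δ → 0⁺`. -/
theorem critical_exponent_alpha_two_three
    {Ω : Type*} [MeasurableSpace Ω] (μ : Measure Ω) [IsProbabilityMeasure μ]
    (w : Ω → ℝ) (hw_meas : Measurable w) (hw_nonneg : ∀ ω, 0 ≤ w ω)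
    (C α : ℝ) (hC : 0 < C) (hα : α ∈ Set.Ioo (2 : ℝ) 3)
    (htail : Tendsto (fun x : ℝ => x ^ (α - 1) * (μ {ω | x < w ω}).toReal)
      atTop (𝓝 C)) :
    (∀ δ : ℝ, 0 < δ →
      ∃! σ : ℝ, 0 < σ ∧ δ * ∫ ω, (w ω) ^ 2 / (1 + σ * w ω) ∂μ = 1) ∧
    ∀ sf : ℝ → ℝ,
      (∀ δ : ℝ, 0 < δ →
        0 < sf δ ∧ δ * ∫ ω, (w ω) ^ 2 / (1 + sf δ * w ω) ∂μ = 1) →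
      Tendsto (fun δ : ℝ => sf δ / δ ^ (1 / (3 - α)))
        (𝓝[>] 0)
        (𝓝 ((C * Real.pi * (α - 1) / Real.sin (Real.pi * α)) ^ (1 / (3 - α)))) := by
  obtain ⟨hα2, hα3⟩ := hα
  set G : ℝ → ℝ := fun σ => ∫ ω, (w ω) ^ 2 / (1 + σ * w ω) ∂μ with hGdef
  obtain ⟨x₀, hx₀1, hx₀⟩ := tail_bound μ hC ⟨hα2, hα3⟩ htail
  have hw_int : Integrable w μ := w_int μ hw_meas hw_nonneg hC ⟨hα2, hα3⟩ htail
  have hμpos : 0 < μ {ω | 0 < w ω} := mu_pos μ hC htail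
  set K : ℝ := C * ((α-1) * π / Real.sin (π*α)) with hKdef
  have hsin : 0 < Real.sin (π*α) := by
    have h1 : Real.sin (π*α) = Real.sin (π*α - 2*π) := by
      rw [show π*α - 2*π = π*α - 2*π from rfl]
      rw [← Real.sin_add_two_pi (π*α - 2*π)]
      ring_nf
    rw [h1]
    refine Real.sin_pos_of_pos_of_lt_pi ?_ ?_
    · nlinarith [pi_pos]
    · nlinarith [pi_pos]
  have hKpos : 0 < K := by
    rw [hKdef]
    exact mul_pos hC (div_pos (by nlinarith [pi_pos]) hsin)
  -- the key asymptotic for G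
  have hGtend : Tendsto (fun σ : ℝ => σ ^ (3-α) * G σ) (𝓝[>] 0) (𝓝 K) := by
    refine (abelian μ hC ⟨hα2, hα3⟩ htail hx₀1 hx₀).congr' ?_
    filter_upwards [self_mem_nhdsWithin] with σ hσ
    have hσ' : (0:ℝ) < σ := hσ
    rw [hGdef]
    simp only
    rw [G_eq_H μ hw_meas hw_nonneg hσ' (layercake_main μ hw_meas hw_nonneg hσ'),
      H_scaled μ ⟨hα2, hα3⟩ hσ']
  -- G blows up at 0⁺
  have hGtop : Tendsto G (𝓝[>] 0) atTop := by
    have h1 : Tendsto (fun σ : ℝ => σ ^ (α-3)) (𝓝[>] 0) atTop := by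
      refine (Tendsto.comp (tendsto_rpow_atTop (by linarith : (0:ℝ) < 3-α))
        tendsto_inv_nhdsGT_zero).congr' ?_
      filter_upwards [self_mem_nhdsWithin] with σ hσ
      have hσ' : (0:ℝ) < σ := hσ
      show (σ⁻¹) ^ (3-α) = σ ^ (α-3)
      rw [← Real.rpow_neg_one σ, ← Real.rpow_mul hσ'.le]
      congr 1; ring
    refine (Tendsto.atTop_mul_pos hKpos h1 hGtend).congr' ?_
    filter_upwards [self_mem_nhdsWithin] with σ hσ
    have hσ' : (0:ℝ) < σ := hσ
    have : σ ^ (α-3) * σ ^ (3-α) = 1 := by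
      rw [← Real.rpow_add hσ']; norm_num
    calc σ ^ (α-3) * (σ ^ (3-α) * G σ) = (σ ^ (α-3) * σ ^ (3-α)) * G σ := by ring
      _ = G σ := by rw [this, one_mul]
  -- Part 1
  have part1 : ∀ δ : ℝ, 0 < δ → ∃! σ : ℝ, 0 < σ ∧ δ * G σ = 1 := by
    intro δ hδ
    obtain ⟨a, ha1, ha0⟩ := ((hGtop.eventually (eventually_ge_atTop (1/δ))).and
      self_mem_nhdsWithin).exists
    have ha0' : (0:ℝ) < a := ha0
    set E : ℝ := ∫ ω, w ω ∂μ with hEdef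
    have hE0 : 0 ≤ E := integral_nonneg hw_nonneg
    set b : ℝ := max a (δ*(E+1)) with hbdef
    have hab : a ≤ b := le_max_left _ _
    have hb0 : (0:ℝ) < b := lt_of_lt_of_le ha0' hab
    have hGb : G b ≤ 1/δ := by
      refine le_trans (G_upper μ hw_meas hw_nonneg hw_int hb0) ?_
      rw [inv_mul_eq_div, div_le_div_iff₀ hb0 hδ]
      have : δ*(E+1) ≤ b := le_max_right _ _
      nlinarith
    have hcont : ContinuousOn G (Set.Icc a b) := fun σ hσ =>
      (G_cont μ hw_meas hw_nonneg hw_int (lt_of_lt_of_le ha0' hσ.1)).continuousWithinAt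
    have hmem : 1/δ ∈ Set.Icc (G b) (G a) := ⟨hGb, ha1⟩
    obtain ⟨σ, hσmem, hσeq⟩ := intermediate_value_Icc' hab hcont hmem
    have hσ0 : 0 < σ := lt_of_lt_of_le ha0' hσmem.1
    refine ⟨σ, ⟨hσ0, by rw [hσeq]; field_simp⟩, ?_⟩
    rintro τ ⟨hτ0, hτeq⟩
    by_contra hne
    have hGτ : G τ = 1/δ := by field_simp at hτeq ⊢; linarith
    have hGσ : G σ = 1/δ := hσeq
    rcases lt_or_gt_of_ne hne with h | h
    · have hstrict := G_strict μ hw_meas hw_nonneg hw_int hμpos hτ0 h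
      have e1 : (∫ ω, (w ω) ^ 2 / (1 + σ * w ω) ∂μ) = (1:ℝ)/δ := hGσ
      have e2 : (∫ ω, (w ω) ^ 2 / (1 + τ * w ω) ∂μ) = (1:ℝ)/δ := hGτ
      rw [e1, e2] at hstrict
      exact lt_irrefl _ hstrict
    · have hstrict := G_strict μ hw_meas hw_nonneg hw_int hμpos hσ0 h
      have e1 : (∫ ω, (w ω) ^ 2 / (1 + σ * w ω) ∂μ) = (1:ℝ)/δ := hGσ
      have e2 : (∫ ω, (w ω) ^ 2 / (1 + τ * w ω) ∂μ) = (1:ℝ)/δ := hGτ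
      rw [e1, e2] at hstrict
      exact lt_irrefl _ hstrict
  refine ⟨part1, ?_⟩
  -- Part 2
  intro sf hsf
  have hsfpos : ∀ δ : ℝ, 0 < δ → 0 < sf δ := fun δ hδ => (hsf δ hδ).1
  have hsfeq : ∀ δ : ℝ, 0 < δ → G (sf δ) = 1/δ := by
    intro δ hδ
    have h : δ * G (sf δ) = 1 := (hsf δ hδ).2
    field_simp at h ⊢
    linarith
  have hsf0 : Tendsto sf (𝓝[>] 0) (𝓝[>] (0:ℝ)) := by
    rw [tendsto_nhdsWithin_iff]
    constructor
    · rw [NormedAddCommGroup.tendsto_nhds_zero]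
      intro ε hε
      have hGa := G_cont μ hw_meas hw_nonneg hw_int (by linarith : (0:ℝ) < ε/2)
      have hev : ∀ᶠ δ : ℝ in 𝓝[>] 0, G (ε/2) < δ⁻¹ :=
        tendsto_inv_nhdsGT_zero.eventually (eventually_gt_atTop (G (ε/2)))
      filter_upwards [hev, self_mem_nhdsWithin] with δ h1 h2
      have hδ : (0:ℝ) < δ := h2
      have hlt : sf δ < ε/2 := by
        by_contra hcon
        push_neg at hcon
        have hanti : G (sf δ) ≤ G (ε/2) :=
          G_anti μ hw_meas hw_nonneg hw_int (by linarith : (0:ℝ) < ε/2) hcon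
        rw [hsfeq δ hδ, one_div] at hanti
        linarith
      rw [Real.norm_eq_abs, abs_of_nonneg (hsfpos δ hδ).le]
      linarith
    · filter_upwards [self_mem_nhdsWithin] with δ hδ
      exact hsfpos δ hδ
  have hcomp : Tendsto (fun δ : ℝ => (sf δ) ^ (3-α) * (1/δ)) (𝓝[>] 0) (𝓝 K) := by
    refine (hGtend.comp hsf0).congr' ?_
    filter_upwards [self_mem_nhdsWithin] with δ hδ
    have hδ' : (0:ℝ) < δ := hδ
    show (sf δ) ^ (3-α) * G (sf δ) = (sf δ) ^ (3-α) * (1/δ)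
    rw [hsfeq δ hδ']
  have hrc : ContinuousAt (fun x : ℝ => x ^ (1/(3-α))) K :=
    Real.continuousAt_rpow_const K _ (Or.inl hKpos.ne')
  have hfinal := (hrc.tendsto.comp hcomp :
    Tendsto (fun δ : ℝ => ((sf δ) ^ (3-α) * (1/δ)) ^ (1/(3-α))) (𝓝[>] 0) (𝓝 (K ^ (1/(3-α)))))
  have hbase : C * π * (α-1) / Real.sin (π*α) = K := by rw [hKdef]; ring
  rw [show C * Real.pi * (α - 1) / Real.sin (Real.pi * α) = K from hbase]
  refine hfinal.congr' ?_
  filter_upwards [self_mem_nhdsWithin] with δ hδ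
  have hδ' : (0:ℝ) < δ := hδ
  have hs' : (0:ℝ) < sf δ := hsfpos δ hδ'
  have h3α : (3:ℝ) - α ≠ 0 := by linarith
  show ((sf δ) ^ (3-α) * (1/δ)) ^ (1/(3-α)) = sf δ / δ ^ (1/(3-α))
  rw [Real.mul_rpow (Real.rpow_nonneg hs'.le _) (by positivity),
    ← Real.rpow_mul hs'.le, mul_one_div, div_self h3α, Real.rpow_one,
    Real.div_rpow (by norm_num) hδ'.le, Real.one_rpow, mul_one_div]
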